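/- Let T be a fixed binary decision tree structure with L_T leaves using threshold-split rules on ℝ^ℓ. If m ≤ L_T, then for every c ≤ m the c-partitioning function satisfies π^c_T(m) = S(m,c), the Stirling number of the second kind, i.e., the tree can realize every c-partition of some m-point sample. -/

import Mathlib

open scoped Classical

/-- Binary tree structures. -/
inductive BTree : Type
  | leaf : BTree
  | node : BTree → BTree → BTree

/-- Number of leaves of a binary tree structure. -/
def BTree.leaves : BTree → ℕ
  | .leaf => 1
  | .node l r => l.leaves + r.leaves

/-- A function `f : ℝ^ℓ → ℕ` is realized by the tree structure `t` with threshold-split rules: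
each leaf carries a free label, each internal node a free feature `i` and threshold `θ`. -/
inductive BTree.Realizes (ℓ : ℕ) : BTree → ((Fin ℓ → ℝ) → ℕ) → Prop
  | leaf (y : ℕ) : BTree.Realizes ℓ .leaf (fun _ => y)
  | node (l r : BTree) (i : Fin ℓ) (θ : ℝ) (fl fr : (Fin ℓ → ℝ) → ℕ) :
      BTree.Realizes ℓ l fl → BTree.Realizes ℓ r fr →
      BTree.Realizes ℓ (.node l r) (fun x => if x i ≤ θ then fl x else fr x)

/-- The `c`-partitioning function of the tree class `t` on `ℝ^ℓ`: the largest number of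
distinct `c`-part fiber partitions realizable on samples of size `m`. -/
noncomputable def BTree.partFn (ℓ : ℕ) (t : BTree) (c m : ℕ) : ℕ :=
  sSup {n | ∃ S : Finset (Fin ℓ → ℝ), S.card = m ∧
    n = Set.ncard {P : Finset (Finset (Fin ℓ → ℝ)) | ∃ f, BTree.Realizes ℓ t f ∧
      P = (S.image f).image (fun v => S.filter (fun x => f x = v)) ∧ P.card = c}}

/-- Stirling numbers of the second kind. -/
def stirling2 : ℕ → ℕ → ℕ
  | 0, 0 => 1
  | 0, _ + 1 => 0
  | _ + 1, 0 => 0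
  | n + 1, k + 1 => (k + 1) * stirling2 n (k + 1) + stirling2 n k


open Finset


noncomputable def partsc {α : Type*} [DecidableEq α] (S : Finset α) (c : ℕ) :
    Finset (Finset (Finset α)) :=
  S.powerset.powerset.filter (fun P => P.card = c ∧ (∀ A ∈ P, A.Nonempty) ∧
    (∀ A ∈ P, ∀ B ∈ P, A ≠ B → Disjoint A B) ∧ P.sup id = S)

lemma mem_partsc {α : Type*} [DecidableEq α] {S : Finset α} {c : ℕ}
    {P : Finset (Finset α)} :
    P ∈ partsc S c ↔ P.card = c ∧ (∀ A ∈ P, A.Nonempty) ∧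
      (∀ A ∈ P, ∀ B ∈ P, A ≠ B → Disjoint A B) ∧ P.sup id = S := by
  unfold partsc
  rw [mem_filter, mem_powerset]
  constructor
  · rintro ⟨-, h⟩; exact h
  · rintro h
    refine ⟨?_, h⟩
    intro A hA
    rw [mem_powerset]
    rw [← h.2.2.2]
    exact le_sup (f := id) hA

lemma partsc_card {α : Type*} [DecidableEq α] (S : Finset α) :
    ∀ c, (partsc S c).card = stirling2 S.card c := by
  induction S using Finset.induction_on with
  | empty =>
    intro c
    cases c with
    | zero =>
      have h : partsc (∅ : Finset α) 0 = {∅} := by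
        ext P
        rw [mem_partsc, mem_singleton]
        constructor
        · rintro ⟨h, -, -, -⟩; exact card_eq_zero.mp h
        · rintro rfl; simp
      simp [h, stirling2]
    | succ k =>
      have h : partsc (∅ : Finset α) (k + 1) = ∅ := by
        rw [eq_empty_iff_forall_notMem]
        intro P hP
        rw [mem_partsc] at hP
        obtain ⟨hcard, hne, -, hsup⟩ := hP
        obtain ⟨A, hA⟩ := card_pos.mp (by omega : 0 < P.card)
        obtain ⟨x, hx⟩ := hne A hA
        have : x ∈ P.sup id := mem_sup.mpr ⟨A, hA, hx⟩
        rw [hsup] at this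
        exact notMem_empty x this
      simp [h, stirling2]
  | @insert a S ha IH =>

    intro c
    rw [card_insert_of_notMem ha]
    cases c with
    | zero =>
      have h : partsc (insert a S) 0 = ∅ := by
        rw [eq_empty_iff_forall_notMem]
        intro P hP
        rw [mem_partsc] at hP
        obtain ⟨hcard, -, -, hsup⟩ := hP
        rw [card_eq_zero.mp hcard] at hsup
        simp only [sup_empty] at hsup
        have hmem := mem_insert_self a S
        rw [← hsup] at hmem
        simp at hmem
      simp [h, stirling2]
    | succ k =>
      -- facts about membership
      have hblock : ∀ P ∈ partsc (insert a S) (k + 1), ∀ B ∈ P, a ∈ B →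
          ∀ C ∈ P, C ≠ B → a ∉ C := by
        intro P hP B hB haB C hC hne haC
        rw [mem_partsc] at hP
        exact (Finset.disjoint_left.mp (hP.2.2.1 C hC B hB hne)) haC haB
      set F1 := (partsc (insert a S) (k + 1)).filter (fun P => {a} ∈ P) with hF1
      set F2 := (partsc (insert a S) (k + 1)).filter (fun P => ¬ ({a} ∈ P)) with hF2
      have hsplit : F1.card + F2.card = (partsc (insert a S) (k + 1)).card :=
        card_filter_add_card_filter_not _
      -- F1 ≃ partsc S k
      have hc1 : F1.card = (partsc S k).card := by
        refine card_bij' (fun P _ => P.erase {a}) (fun Q _ => insert {a} Q) ?_ ?_ ?_ ?_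
        · -- maps into partsc S k
          intro P hP
          rw [hF1, mem_filter] at hP
          obtain ⟨hP, hsing⟩ := hP
          have hPm := hP
          rw [mem_partsc] at hPm
          obtain ⟨hcard, hne, hdisj, hsup⟩ := hPm
          have hnota : ∀ B ∈ P.erase {a}, a ∉ B := by
            intro B hB
            exact hblock P hP {a} hsing (mem_singleton_self a) B (mem_of_mem_erase hB)
              (ne_of_mem_erase hB)
          have hsub : ∀ B ∈ P.erase {a}, B ⊆ S := by
            intro B hB x hx
            have : x ∈ insert a S := by
              rw [← hsup]
              exact mem_sup.mpr ⟨B, mem_of_mem_erase hB, hx⟩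
            rcases mem_insert.mp this with rfl | h
            · exact absurd hx (hnota B hB)
            · exact h
          rw [mem_partsc]
          refine ⟨by simp [card_erase_of_mem hsing, hcard], ?_, ?_, ?_⟩
          · exact fun A hA => hne A (mem_of_mem_erase hA)
          · exact fun A hA B hB h => hdisj A (mem_of_mem_erase hA) B (mem_of_mem_erase hB) h
          · apply le_antisymm
            · exact Finset.sup_le fun B hB => hsub B hB
            · intro x hx
              have : x ∈ insert a S := mem_insert_of_mem hx
              rw [← hsup] at this
              obtain ⟨B, hB, hxB⟩ := mem_sup.mp this
              have hBne : B ≠ {a} := by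
                rintro rfl
                simp only [id_eq, mem_singleton] at hxB
                exact ha (hxB ▸ hx)
              exact mem_sup.mpr ⟨B, mem_erase.mpr ⟨hBne, hB⟩, hxB⟩
        · -- inverse maps into F1
          intro Q hQ
          rw [mem_partsc] at hQ
          obtain ⟨hcard, hne, hdisj, hsup⟩ := hQ
          have hsubS : ∀ B ∈ Q, B ⊆ S := by
            intro B hB
            rw [← hsup]; exact le_sup (f := id) hB
          have hsing : {a} ∉ Q := fun h => ha (hsubS _ h (mem_singleton_self a))
          rw [hF1, mem_filter]
          refine ⟨?_, mem_insert_self _ _⟩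
          rw [mem_partsc]
          refine ⟨by rw [card_insert_of_notMem hsing, hcard], ?_, ?_, ?_⟩
          · intro A hA
            rcases mem_insert.mp hA with rfl | h
            · exact singleton_nonempty a
            · exact hne A h
          · intro A hA B hB hAB
            rcases mem_insert.mp hA with rfl | hA' <;> rcases mem_insert.mp hB with rfl | hB'
            · exact absurd rfl hAB
            · exact Finset.disjoint_singleton_left.mpr fun h => ha (hsubS B hB' h)
            · exact (Finset.disjoint_singleton_left.mpr fun h => ha (hsubS A hA' h)).symm
            · exact hdisj A hA' B hB' hAB
          · rw [sup_insert, hsup]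
            simp [Finset.insert_eq, -Finset.singleton_union]
        · -- left inverse
          intro P hP
          rw [hF1, mem_filter] at hP
          exact insert_erase hP.2
        · -- right inverse
          intro Q hQ
          rw [mem_partsc] at hQ
          have hsubS : ∀ B ∈ Q, B ⊆ S := by
            intro B hB
            rw [← hQ.2.2.2]; exact le_sup (f := id) hB
          have hsing : {a} ∉ Q := fun h => ha (hsubS _ h (mem_singleton_self a))
          exact erase_insert hsing
      have hsubS : ∀ {c : ℕ} {Q : Finset (Finset α)}, Q ∈ partsc S c → ∀ B ∈ Q, B ⊆ S := by
        intro c Q hQ B hB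
        rw [mem_partsc] at hQ
        rw [← hQ.2.2.2]
        exact le_sup (f := id) hB
      have hc2 : F2.card = ((partsc S (k + 1)).sigma (fun Q => Q)).card := by
        symm
        refine card_bij (fun q _ => insert (insert a q.2) (q.1.erase q.2)) ?_ ?_ ?_
        · -- maps into F2
          rintro ⟨Q, B⟩ hq
          rw [mem_sigma] at hq
          obtain ⟨hQ, hB⟩ := hq
          have hQm := hQ
          rw [mem_partsc] at hQm
          obtain ⟨hcard, hne, hdisj, hsup⟩ := hQm
          have hBS : B ⊆ S := hsubS hQ B hB
          have haB : a ∉ B := fun h => ha (hBS h)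
          have hnotmem : insert a B ∉ Q.erase B := fun h =>
            ha (hsubS hQ _ (mem_of_mem_erase h) (mem_insert_self a B))
          rw [hF2, mem_filter]
          constructor
          · rw [mem_partsc]
            refine ⟨?_, ?_, ?_, ?_⟩
            · rw [card_insert_of_notMem hnotmem, card_erase_of_mem hB, hcard]
              omega
            · intro A hA
              rcases mem_insert.mp hA with rfl | h
              · exact insert_nonempty a B
              · exact hne A (mem_of_mem_erase h)
            · intro A hA A' hA' hne'
              rcases mem_insert.mp hA with rfl | h <;> rcases mem_insert.mp hA' with rfl | h'
              · exact absurd rfl hne'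
              · rw [Finset.disjoint_insert_left]
                exact ⟨fun hmem => ha (hsubS hQ _ (mem_of_mem_erase h') hmem),
                  hdisj B hB A' (mem_of_mem_erase h') (ne_of_mem_erase h').symm⟩
              · rw [Finset.disjoint_insert_right]
                exact ⟨fun hmem => ha (hsubS hQ _ (mem_of_mem_erase h) hmem),
                  hdisj A (mem_of_mem_erase h) B hB (ne_of_mem_erase h)⟩
              · exact hdisj A (mem_of_mem_erase h) A' (mem_of_mem_erase h') hne'
            · have hq1 : B ⊔ (Q.erase B).sup id = S := by
                have h1 : (insert B (Q.erase B)).sup id = id B ⊔ (Q.erase B).sup id :=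
                  sup_insert
                rw [insert_erase hB, hsup] at h1
                exact h1.symm
              rw [sup_insert]
              simp only [id_eq]
              rw [sup_eq_union, insert_union, ← sup_eq_union, hq1]
          · intro hmem
            rcases mem_insert.mp hmem with h | h
            · obtain ⟨x, hx⟩ := hne B hB
              have hx' : x ∈ insert a B := mem_insert_of_mem hx
              rw [← h, mem_singleton] at hx'
              exact haB (hx' ▸ hx)
            · exact ha (hsubS hQ _ (mem_of_mem_erase h) (mem_singleton_self a))
        · -- injective
          rintro ⟨Q, B⟩ hq ⟨Q', B'⟩ hq' heq
          rw [mem_sigma] at hq hq'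
          obtain ⟨hQ, hB⟩ := hq
          obtain ⟨hQ', hB'⟩ := hq'
          simp only at heq hQ hB hQ' hB'
          have haB : a ∉ B := fun h => ha (hsubS hQ B hB h)
          have haB' : a ∉ B' := fun h => ha (hsubS hQ' B' hB' h)
          have h1 : insert a B ∈ insert (insert a B') (Q'.erase B') := by
            rw [← heq]
            exact mem_insert_self _ _
          have hBB' : insert a B = insert a B' := by
            rcases mem_insert.mp h1 with h | h
            · exact h
            · exact absurd ((hsubS hQ' _ (mem_of_mem_erase h)) (mem_insert_self a B)) ha
          have hB2 : B = B' := by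
            have h2 := congrArg (fun s => Finset.erase s a) hBB'
            simpa [erase_insert haB, erase_insert haB'] using h2
          subst hB2
          have hnm : insert a B ∉ Q.erase B := fun h =>
            ha (hsubS hQ _ (mem_of_mem_erase h) (mem_insert_self a B))
          have hnm' : insert a B ∉ Q'.erase B := fun h =>
            ha (hsubS hQ' _ (mem_of_mem_erase h) (mem_insert_self a B))
          have h2 : Q.erase B = Q'.erase B := by
            have h3 := congrArg (fun s => Finset.erase s (insert a B)) heq
            simpa [erase_insert hnm, erase_insert hnm'] using h3
          have hQQ : Q = Q' := by
            rw [← insert_erase hB, ← insert_erase hB', h2]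
          cases hQQ
          rfl
        · -- surjective
          intro P hP
          rw [hF2, mem_filter] at hP
          obtain ⟨hPp, hsing⟩ := hP
          have hPm := hPp
          rw [mem_partsc] at hPm
          obtain ⟨hcard, hne, hdisj, hsup⟩ := hPm
          have hamem : a ∈ P.sup id := by
            rw [hsup]
            exact mem_insert_self a S
          obtain ⟨B₀, hB₀, haB₀⟩ := mem_sup.mp hamem
          have haB₀' : a ∈ B₀ := haB₀
          have hB₀ne : B₀ ≠ {a} := fun h => hsing (h ▸ hB₀)
          set B := B₀.erase a with hBdef
          have hBne : B.Nonempty := by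
            rw [nonempty_iff_ne_empty]
            intro h
            apply hB₀ne
            apply Finset.eq_singleton_iff_unique_mem.mpr
            refine ⟨haB₀', fun x hx => ?_⟩
            by_contra hxa
            have : x ∈ B := mem_erase.mpr ⟨hxa, hx⟩
            rw [h] at this
            exact notMem_empty x this
          have hothers : ∀ C ∈ P.erase B₀, C ⊆ S := by
            intro C hC x hx
            have hnaC : a ∉ C := hblock P hPp B₀ hB₀ haB₀' C (mem_of_mem_erase hC)
              (ne_of_mem_erase hC)
            have hxm : x ∈ insert a S := by
              rw [← hsup]
              exact mem_sup.mpr ⟨C, mem_of_mem_erase hC, hx⟩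
            rcases mem_insert.mp hxm with rfl | h
            · exact absurd hx hnaC
            · exact h
          have hBS : B ⊆ S := by
            intro x hx
            rw [hBdef, mem_erase] at hx
            have hxm : x ∈ insert a S := by
              rw [← hsup]
              exact mem_sup.mpr ⟨B₀, hB₀, hx.2⟩
            rcases mem_insert.mp hxm with h | h
            · exact absurd h hx.1
            · exact h
          have hBnm : B ∉ P.erase B₀ := by
            intro h
            obtain ⟨x, hx⟩ := hBne
            exact Finset.disjoint_left.mp
              (hdisj B (mem_of_mem_erase h) B₀ hB₀ (ne_of_mem_erase h)) hx
              (erase_subset a B₀ hx)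
          refine ⟨⟨insert B (P.erase B₀), B⟩, ?_, ?_⟩
          · rw [mem_sigma]
            refine ⟨?_, mem_insert_self _ _⟩
            rw [mem_partsc]
            refine ⟨?_, ?_, ?_, ?_⟩
            · rw [card_insert_of_notMem hBnm, card_erase_of_mem hB₀, hcard]
              omega
            · intro A hA
              rcases mem_insert.mp hA with rfl | h
              · exact hBne
              · exact hne A (mem_of_mem_erase h)
            · intro A hA A' hA' hne'
              rcases mem_insert.mp hA with rfl | h <;> rcases mem_insert.mp hA' with rfl | h'
              · exact absurd rfl hne'
              · exact Finset.disjoint_of_subset_left (erase_subset a B₀)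
                  (hdisj B₀ hB₀ A' (mem_of_mem_erase h') (ne_of_mem_erase h').symm)
              · exact Finset.disjoint_of_subset_right (erase_subset a B₀)
                  (hdisj A (mem_of_mem_erase h) B₀ hB₀ (ne_of_mem_erase h))
              · exact hdisj A (mem_of_mem_erase h) A' (mem_of_mem_erase h') hne'
            · apply le_antisymm
              · apply Finset.sup_le
                intro A hA
                rcases mem_insert.mp hA with rfl | h
                · exact hBS
                · exact hothers A h
              · intro x hx
                have hxm : x ∈ insert a S := mem_insert_of_mem hx
                rw [← hsup] at hxm
                obtain ⟨C, hC, hxC⟩ := mem_sup.mp hxm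
                rcases eq_or_ne C B₀ with rfl | hne'
                · refine mem_sup.mpr ⟨B, mem_insert_self _ _, ?_⟩
                  show x ∈ B
                  rw [hBdef]
                  exact mem_erase.mpr ⟨fun h => ha (h ▸ hx), hxC⟩
                · exact mem_sup.mpr ⟨C, mem_insert_of_mem (mem_erase.mpr ⟨hne', hC⟩), hxC⟩
          · show insert (insert a B) ((insert B (P.erase B₀)).erase B) = P
            rw [erase_insert hBnm]
            have hiB : insert a B = B₀ := by
              rw [hBdef]
              exact insert_erase haB₀'
            rw [hiB, insert_erase hB₀]
      have hsigma : ((partsc S (k + 1)).sigma (fun Q => Q)).card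
          = (k + 1) * (partsc S (k + 1)).card := by
        rw [card_sigma]
        rw [Finset.sum_congr rfl (fun Q hQ => (mem_partsc.mp hQ).1)]
        rw [sum_const, smul_eq_mul, mul_comm]
      have hst : stirling2 (S.card + 1) (k + 1)
          = (k + 1) * stirling2 S.card (k + 1) + stirling2 S.card k := rfl
      rw [hst, ← hsplit, hc1, hc2, hsigma, IH, IH]
      ring


lemma BTree.leaves_pos (t : BTree) : 1 ≤ t.leaves := by
  induction t with
  | leaf => simp [BTree.leaves]
  | node l r ihl ihr => simp only [BTree.leaves]; omega

def psample (ℓ : ℕ) (j : ℕ) : Fin ℓ → ℝ := fun _ => (j : ℝ)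

lemma psample_inj {ℓ : ℕ} (hℓ : 1 ≤ ℓ) : Function.Injective (psample ℓ) := by
  intro i j h
  have h0 := congrFun h ⟨0, hℓ⟩
  simpa [psample] using h0

lemma realize_seg (ℓ : ℕ) (hℓ : 1 ≤ ℓ) (t : BTree) (g : ℕ → ℕ) :
    ∀ a : ℕ, ∃ f, BTree.Realizes ℓ t f ∧
      ∀ j, a ≤ j → j < a + t.leaves → f (psample ℓ j) = g j := by
  induction t with
  | leaf =>
    intro a
    refine ⟨fun _ => g a, BTree.Realizes.leaf (g a), ?_⟩
    intro j h1 h2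
    simp only [BTree.leaves] at h2
    have : j = a := by omega
    rw [this]
  | node l r ihl ihr =>
    intro a
    obtain ⟨fl, hfl, hfl2⟩ := ihl a
    obtain ⟨fr, hfr, hfr2⟩ := ihr (a + l.leaves)
    refine ⟨_, BTree.Realizes.node l r ⟨0, hℓ⟩ ((a + l.leaves - 1 : ℕ) : ℝ) fl fr hfl hfr, ?_⟩
    intro j h1 h2
    have hlp := l.leaves_pos
    simp only [BTree.leaves] at h2
    show (if psample ℓ j ⟨0, hℓ⟩ ≤ ((a + l.leaves - 1 : ℕ) : ℝ) then fl (psample ℓ j)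
      else fr (psample ℓ j)) = g j
    by_cases hj : j < a + l.leaves
    · rw [if_pos]
      · exact hfl2 j h1 hj
      · show ((j : ℕ) : ℝ) ≤ ((a + l.leaves - 1 : ℕ) : ℝ)
        exact Nat.cast_le.mpr (by omega)
    · rw [if_neg]
      · exact hfr2 j (by omega) (by omega)
      · show ¬ ((j : ℕ) : ℝ) ≤ ((a + l.leaves - 1 : ℕ) : ℝ)
        rw [not_le]
        exact Nat.cast_lt.mpr (by omega)

noncomputable def blkOf {α : Type*} (P : Finset (Finset α)) (x : α) : Finset α :=
  if h : ∃ B ∈ P, x ∈ B then h.choose else ∅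

lemma blkOf_spec {α : Type*} {P : Finset (Finset α)} {x : α} (h : ∃ B ∈ P, x ∈ B) :
    blkOf P x ∈ P ∧ x ∈ blkOf P x := by
  rw [blkOf, dif_pos h]
  exact ⟨h.choose_spec.1, h.choose_spec.2⟩

lemma blkOf_eq {α : Type*} {P : Finset (Finset α)}
    (hdisj : ∀ A ∈ P, ∀ B ∈ P, A ≠ B → Disjoint A B)
    {x : α} {B : Finset α} (hB : B ∈ P) (hx : x ∈ B) : blkOf P x = B := by
  have h : ∃ C ∈ P, x ∈ C := ⟨B, hB, hx⟩
  obtain ⟨hmem, hxm⟩ := blkOf_spec h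
  by_contra hne
  exact Finset.disjoint_left.mp (hdisj _ hmem _ hB hne) hxm hx

lemma realize_part (ℓ : ℕ) (hℓ : 1 ≤ ℓ) (t : BTree) (m : ℕ) (hm : m ≤ t.leaves)
    (S : Finset (Fin ℓ → ℝ)) (hS : S = (Finset.range m).image (psample ℓ))
    (P : Finset (Finset (Fin ℓ → ℝ)))
    (hne : ∀ A ∈ P, A.Nonempty)
    (hdisj : ∀ A ∈ P, ∀ B ∈ P, A ≠ B → Disjoint A B)
    (hsup : P.sup id = S) :
    ∃ f, BTree.Realizes ℓ t f ∧
      P = (S.image f).image (fun v => S.filter (fun x => f x = v)) := by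
  classical
  set idx : Finset (Fin ℓ → ℝ) → ℕ :=
    fun B => if h : B ∈ P then (P.equivFin ⟨B, h⟩ : ℕ) else 0 with hidx
  have idx_inj : ∀ B ∈ P, ∀ C ∈ P, idx B = idx C → B = C := by
    intro B hB C hC h
    rw [hidx] at h
    simp only [dif_pos hB, dif_pos hC] at h
    have h2 : P.equivFin ⟨B, hB⟩ = P.equivFin ⟨C, hC⟩ := Fin.ext h
    have h3 := P.equivFin.injective h2
    exact congrArg Subtype.val h3
  obtain ⟨f, hf, hfp⟩ := realize_seg ℓ hℓ t (fun j => idx (blkOf P (psample ℓ j))) 0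
  have blkS : ∀ B ∈ P, B ⊆ S := by
    intro B hB
    rw [← hsup]
    exact le_sup (f := id) hB
  have key : ∀ x ∈ S, f x = idx (blkOf P x) ∧ blkOf P x ∈ P ∧ x ∈ blkOf P x := by
    intro x hx
    have hxB : ∃ B ∈ P, x ∈ B := by
      rw [← hsup] at hx
      exact mem_sup.mp hx
    obtain ⟨hb1, hb2⟩ := blkOf_spec hxB
    rw [hS, mem_image] at hx
    obtain ⟨j, hj, rfl⟩ := hx
    rw [mem_range] at hj
    exact ⟨hfp j (Nat.zero_le j) (by omega), hb1, hb2⟩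
  have filter_eq : ∀ x ∈ S, S.filter (fun y => f y = f x) = blkOf P x := by
    intro x hx
    obtain ⟨hfx, hbx, hxbx⟩ := key x hx
    ext y
    simp only [mem_filter]
    constructor
    · rintro ⟨hyS, hfy⟩
      obtain ⟨hfy', hby, hyby⟩ := key y hyS
      have heq : blkOf P y = blkOf P x :=
        idx_inj _ hby _ hbx (by rw [← hfy', ← hfx, hfy])
      rw [← heq]
      exact hyby
    · intro hy
      have hyS : y ∈ S := blkS _ hbx hy
      refine ⟨hyS, ?_⟩
      obtain ⟨hfy', hby, hyby⟩ := key y hyS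
      have heq : blkOf P y = blkOf P x := by
        rw [blkOf_eq hdisj hbx hy]
      rw [hfy', heq, hfx]
  refine ⟨f, hf, ?_⟩
  apply Finset.Subset.antisymm
  · intro B hB
    obtain ⟨x, hx⟩ := hne B hB
    have hxS : x ∈ S := blkS B hB hx
    rw [mem_image]
    refine ⟨f x, mem_image_of_mem f hxS, ?_⟩
    rw [filter_eq x hxS, blkOf_eq hdisj hB hx]
  · intro A hA
    rw [mem_image] at hA
    obtain ⟨v, hv, rfl⟩ := hA
    rw [mem_image] at hv
    obtain ⟨x, hxS, rfl⟩ := hv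
    obtain ⟨hfx, hbx, hxbx⟩ := key x hxS
    rw [filter_eq x hxS]
    exact hbx

lemma realset_subset (ℓ : ℕ) (t : BTree) (c : ℕ) (S : Finset (Fin ℓ → ℝ)) :
    {P : Finset (Finset (Fin ℓ → ℝ)) | ∃ f, BTree.Realizes ℓ t f ∧
      P = (S.image f).image (fun v => S.filter (fun x => f x = v)) ∧ P.card = c}
      ⊆ ↑(partsc S c) := by
  rintro P ⟨f, hf, hP, hc⟩
  simp only [Finset.mem_coe]
  rw [mem_partsc]
  subst hP
  refine ⟨hc, ?_, ?_, ?_⟩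
  · intro A hA
    obtain ⟨v, hv, rfl⟩ := mem_image.mp hA
    obtain ⟨x, hx, rfl⟩ := mem_image.mp hv
    exact ⟨x, mem_filter.mpr ⟨hx, rfl⟩⟩
  · intro A hA B hB hAB
    obtain ⟨v, hv, rfl⟩ := mem_image.mp hA
    obtain ⟨w, hw, rfl⟩ := mem_image.mp hB
    rw [Finset.disjoint_left]
    intro y hy1 hy2
    obtain ⟨-, h1⟩ := mem_filter.mp hy1
    obtain ⟨-, h2⟩ := mem_filter.mp hy2
    exact hAB (by rw [h1.symm.trans h2])
  · apply le_antisymm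
    · apply Finset.sup_le
      intro A hA
      obtain ⟨v, hv, rfl⟩ := mem_image.mp hA
      exact filter_subset _ _
    · intro x hx
      exact mem_sup.mpr ⟨S.filter (fun y => f y = f x),
        mem_image_of_mem _ (mem_image_of_mem f hx), mem_filter.mpr ⟨hx, rfl⟩⟩

lemma realset_eq (ℓ : ℕ) (hℓ : 1 ≤ ℓ) (t : BTree) (m c : ℕ) (hm : m ≤ t.leaves)
    (S : Finset (Fin ℓ → ℝ)) (hS : S = (Finset.range m).image (psample ℓ)) :
    {P : Finset (Finset (Fin ℓ → ℝ)) | ∃ f, BTree.Realizes ℓ t f ∧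
      P = (S.image f).image (fun v => S.filter (fun x => f x = v)) ∧ P.card = c}
      = ↑(partsc S c) := by
  apply Set.Subset.antisymm (realset_subset ℓ t c S)
  intro P hP
  simp only [Finset.mem_coe] at hP
  rw [mem_partsc] at hP
  obtain ⟨hcard, hne, hdisj, hsup⟩ := hP
  obtain ⟨f, hf, hPeq⟩ := realize_part ℓ hℓ t m hm S hS P hne hdisj hsup
  exact ⟨f, hf, hPeq, hcard⟩

/-- If `m ≤ L_T` then for every `c ≤ m` the `c`-partitioning function equals the Stirling
number `S(m,c)`: the tree can realize every `c`-partition of some `m`-point sample. -/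
theorem partFn_eq_stirling_of_le_leaves (ℓ : ℕ) (hℓ : 1 ≤ ℓ) (t : BTree) (m c : ℕ)
    (hm : m ≤ t.leaves) (hc : c ≤ m) :
    BTree.partFn ℓ t c m = stirling2 m c ∧
    ∃ S : Finset (Fin ℓ → ℝ), S.card = m ∧
      ∀ P : Finset (Finset (Fin ℓ → ℝ)), P.card = c → (∀ A ∈ P, A.Nonempty) →
        (∀ A ∈ P, ∀ B ∈ P, A ≠ B → Disjoint A B) → P.sup id = S →
        ∃ f, BTree.Realizes ℓ t f ∧
          P = (S.image f).image (fun v => S.filter (fun x => f x = v)) := by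
  have hSdef : ((Finset.range m).image (psample ℓ) : Finset (Fin ℓ → ℝ))
      = (Finset.range m).image (psample ℓ) := rfl
  set S : Finset (Fin ℓ → ℝ) := (Finset.range m).image (psample ℓ) with hSd
  have hScard : S.card = m := by
    rw [hSd, card_image_of_injective _ (psample_inj hℓ), card_range]
  constructor
  · unfold BTree.partFn
    have hmem : stirling2 m c ∈ {n | ∃ S' : Finset (Fin ℓ → ℝ), S'.card = m ∧
        n = Set.ncard {P : Finset (Finset (Fin ℓ → ℝ)) | ∃ f, BTree.Realizes ℓ t f ∧
          P = (S'.image f).image (fun v => S'.filter (fun x => f x = v)) ∧ P.card = c}} := by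
      refine ⟨S, hScard, ?_⟩
      rw [realset_eq ℓ hℓ t m c hm S hSd, Set.ncard_coe_finset, partsc_card, hScard]
    have hub : ∀ n ∈ {n | ∃ S' : Finset (Fin ℓ → ℝ), S'.card = m ∧
        n = Set.ncard {P : Finset (Finset (Fin ℓ → ℝ)) | ∃ f, BTree.Realizes ℓ t f ∧
          P = (S'.image f).image (fun v => S'.filter (fun x => f x = v)) ∧ P.card = c}},
        n ≤ stirling2 m c := by
      rintro n ⟨S', hS', rfl⟩
      calc Set.ncard _ ≤ Set.ncard (↑(partsc S' c) : Set (Finset (Finset (Fin ℓ → ℝ)))) :=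
            Set.ncard_le_ncard (realset_subset ℓ t c S') (Finset.finite_toSet _)
        _ = stirling2 m c := by rw [Set.ncard_coe_finset, partsc_card, hS']
    exact le_antisymm (csSup_le ⟨_, hmem⟩ hub) (le_csSup ⟨stirling2 m c, hub⟩ hmem)
  · refine ⟨S, hScard, ?_⟩
    intro P hcard hne hdisj hsup
    obtain ⟨f, hf, hPeq⟩ := realize_part ℓ hℓ t m hm S hSd P hne hdisj hsup
    exact ⟨f, hf, hPeq⟩
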